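/- Local convergence of the averaged fixed-point iteration (Theorem 2): let N ≥ 2, let F ∈ ℝ^{N×N} have zero diagonal and strictly positive off-diagonal entries, let ω, n ∈ ℝ^N have strictly positive entries, and let c > 0. Define T on pairs of positive vectors (q, y) ∈ ℝ^N_{>0} × ℝ^N_{>0} by T(q, y) = (f₁(q,y), f₂(q,y)) where f₁(q,y)_i = ((F^T q)_i + ω_i)/(q_i y_i) and f₂(q,y)_i = (F q^{-1})_i + (1/c)·n_i·(ω^T q^{-1}), with q^{-1} the entrywise inverse of q. Suppose z⋆ = (q⋆, y⋆) with all entries positive is a fixed point of T. Then there exists ε > 0 such that for every initial point z₀ with ‖z₀ − z⋆‖ < ε, the sequence defined by z_{k+1} = ½(z_k + T(z_k)) converges to z⋆. -/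

import Mathlib

open Matrix Finset Filter

section AuxDefs

open ContinuousLinearMap

/-- Evaluation of the first component at index `j`, as a continuous linear map. -/
noncomputable def aev1 (N : ℕ) (j : Fin N) : ((Fin N → ℝ) × (Fin N → ℝ)) →L[ℝ] ℝ :=
  (proj j).comp (fst ℝ (Fin N → ℝ) (Fin N → ℝ))

/-- Evaluation of the second component at index `j`, as a continuous linear map. -/
noncomputable def aev2 (N : ℕ) (j : Fin N) : ((Fin N → ℝ) × (Fin N → ℝ)) →L[ℝ] ℝ :=
  (proj j).comp (snd ℝ (Fin N → ℝ) (Fin N → ℝ))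

variable {N : ℕ}

@[simp] lemma aev1_apply (j : Fin N) (z : (Fin N → ℝ) × (Fin N → ℝ)) : aev1 N j z = z.1 j := rfl
@[simp] lemma aev2_apply (j : Fin N) (z : (Fin N → ℝ) × (Fin N → ℝ)) : aev2 N j z = z.2 j := rfl

/-- Entrywise scaling map. -/
noncomputable def ascale (p s : Fin N → ℝ) :
    ((Fin N → ℝ) × (Fin N → ℝ)) →L[ℝ] ((Fin N → ℝ) × (Fin N → ℝ)) :=
  (ContinuousLinearMap.pi fun i => p i • aev1 N i).prod
    (ContinuousLinearMap.pi fun i => s i • aev2 N i)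

@[simp] lemma ascale_apply (p s : Fin N → ℝ) (z : (Fin N → ℝ) × (Fin N → ℝ)) :
    ascale p s z = (fun i => p i * z.1 i, fun i => s i * z.2 i) := rfl

lemma aux_tendsto_of_lipschitzOnWith {X : Type*} [MetricSpace X] (f : X → X) (x : X)
    (K : NNReal) (hK : K < 1) (r : ℝ) (hr : 0 < r) (hfx : f x = x)
    (hl : LipschitzOnWith K f (Metric.closedBall x r)) :
    ∀ y ∈ Metric.closedBall x r, Tendsto (fun k => f^[k] y) atTop (nhds x) := by
  have hxmem : x ∈ Metric.closedBall x r := Metric.mem_closedBall_self hr.le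
  have hK1 : (K : ℝ) < 1 := hK
  have hK0 : (0:ℝ) ≤ K := K.coe_nonneg
  have hinv : ∀ y ∈ Metric.closedBall x r, f y ∈ Metric.closedBall x r := by
    intro y hy
    have := hl.dist_le_mul y hy x hxmem
    rw [hfx] at this
    have hy' := Metric.mem_closedBall.1 hy
    refine Metric.mem_closedBall.2 (this.trans ?_)
    nlinarith [dist_nonneg (x := y) (y := x)]
  have key : ∀ k, ∀ y ∈ Metric.closedBall x r, f^[k] y ∈ Metric.closedBall x r ∧
      dist (f^[k] y) x ≤ (K:ℝ)^k * r := by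
    intro k
    induction k with
    | zero => intro y hy; exact ⟨hy, by simpa using Metric.mem_closedBall.1 hy⟩
    | succ k ih =>
      intro y hy
      obtain ⟨hmem, hd⟩ := ih y hy
      rw [Function.iterate_succ_apply']
      refine ⟨hinv _ hmem, ?_⟩
      have := hl.dist_le_mul _ hmem x hxmem
      rw [hfx] at this
      calc dist (f (f^[k] y)) x ≤ K * dist (f^[k] y) x := this
        _ ≤ K * ((K:ℝ)^k * r) := by nlinarith
        _ = (K:ℝ)^(k+1) * r := by ring
  intro y hy
  rw [tendsto_iff_dist_tendsto_zero]
  have hgeo : Tendsto (fun k : ℕ => (K:ℝ)^k * r) atTop (nhds 0) := by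
    simpa using (tendsto_pow_atTop_nhds_zero_of_lt_one hK0 hK1).mul_const r
  exact squeeze_zero (fun k => dist_nonneg) (fun k => (key k y hy).2) hgeo

lemma coord1_deriv (F : Matrix (Fin N) (Fin N) ℝ) (ω Q Y : Fin N → ℝ) (i : Fin N)
    (hQi : Q i ≠ 0) (hYi : Y i ≠ 0)
    (hid : ∑ j, F j i * Q j + ω i = Q i * (Q i * Y i)) :
    HasStrictFDerivAt (fun z : (Fin N → ℝ) × (Fin N → ℝ) =>
      (1/2:ℝ) * (z.1 i + ((F.transpose.mulVec z.1) i + ω i) / (z.1 i * z.2 i)))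
      ((∑ j, (F j i/(2*Q i*Y i)) • aev1 N j) + (-(Q i)/(2*Y i)) • aev2 N i) (Q, Y) := by
  have hden : Q i * Y i ≠ 0 := mul_ne_zero hQi hYi
  have h1 : HasStrictFDerivAt (fun z : (Fin N → ℝ) × (Fin N → ℝ) => z.1 i) (aev1 N i) (Q, Y) :=
    (aev1 N i).hasStrictFDerivAt
  have h2 : HasStrictFDerivAt (fun z : (Fin N → ℝ) × (Fin N → ℝ) => z.2 i) (aev2 N i) (Q, Y) :=
    (aev2 N i).hasStrictFDerivAt
  have hnum : HasStrictFDerivAt (fun z : (Fin N → ℝ) × (Fin N → ℝ) =>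
      (F.transpose.mulVec z.1) i + ω i) (∑ j, (F j i) • aev1 N j) (Q, Y) := by
    have heq : (fun z : (Fin N → ℝ) × (Fin N → ℝ) => (F.transpose.mulVec z.1) i + ω i)
        = fun z => (∑ j, (F j i) * ((aev1 N j) z)) + ω i := by
      funext z; simp [Matrix.mulVec, dotProduct, Matrix.transpose_apply]
    rw [heq]
    exact (HasStrictFDerivAt.fun_sum (fun j _ =>
      ((aev1 N j).hasStrictFDerivAt.const_mul (F j i)))).add_const (ω i)
  have hmul : HasStrictFDerivAt (fun z : (Fin N → ℝ) × (Fin N → ℝ) => z.1 i * z.2 i)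
      (Q i • aev2 N i + Y i • aev1 N i) (Q, Y) := h1.mul h2
  have hinv : HasStrictFDerivAt (fun z : (Fin N → ℝ) × (Fin N → ℝ) => (z.1 i * z.2 i)⁻¹)
      ((ContinuousLinearMap.smulRight (1 : ℝ →L[ℝ] ℝ) (-((Q i * Y i) ^ 2)⁻¹)).comp
        (Q i • aev2 N i + Y i • aev1 N i))
      (Q, Y) := (hasStrictFDerivAt_inv hden).comp (Q, Y) hmul
  have hfrac := hnum.mul hinv
  have hall := (h1.add hfrac).const_mul (1/2 : ℝ)
  have heq2 : (fun z : (Fin N → ℝ) × (Fin N → ℝ) =>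
      (1/2:ℝ) * (z.1 i + ((F.transpose.mulVec z.1) i + ω i) / (z.1 i * z.2 i)))
      = fun z => (1/2:ℝ) * (z.1 i + ((F.transpose.mulVec z.1) i + ω i) * (z.1 i * z.2 i)⁻¹) := by
    funext z; rw [div_eq_mul_inv ((F.transpose.mulVec z.1) i + ω i)]
  rw [heq2]
  refine HasStrictFDerivAt.congr_fderiv hall ?_
  refine ContinuousLinearMap.ext fun w => ?_
  have hnumval : (F.transpose.mulVec Q) i + ω i = Q i * (Q i * Y i) := by
    simpa [Matrix.mulVec, dotProduct, Matrix.transpose_apply] using hid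
  simp only [ContinuousLinearMap.add_apply, ContinuousLinearMap.smul_apply,
    ContinuousLinearMap.sum_apply, ContinuousLinearMap.comp_apply,
    ContinuousLinearMap.smulRight_apply, ContinuousLinearMap.one_apply,
    aev1_apply, aev2_apply, smul_eq_mul, hnumval]
  have hsum : ∑ j, (F j i/(2*Q i*Y i)) * w.1 j = (∑ j, F j i * w.1 j) / (2*Q i*Y i) := by
    rw [Finset.sum_div]; exact Finset.sum_congr rfl (fun j _ => by ring)
  rw [hsum]
  field_simp
  ring

lemma coord2_deriv (F : Matrix (Fin N) (Fin N) ℝ) (ω n Q Y : Fin N → ℝ) (c : ℝ) (i : Fin N)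
    (hQ : ∀ j, Q j ≠ 0) :
    HasStrictFDerivAt (fun z : (Fin N → ℝ) × (Fin N → ℝ) =>
      (1/2:ℝ) * (z.2 i + ((F.mulVec (fun j => (z.1 j)⁻¹)) i
        + (1 / c) * n i * (∑ j, ω j * (z.1 j)⁻¹))))
      ((∑ j, (-((F i j + (1/c) * n i * ω j)/((Q j)^2))/2) • aev1 N j) + (1/2:ℝ) • aev2 N i)
      (Q, Y) := by
  have h2 : HasStrictFDerivAt (fun z : (Fin N → ℝ) × (Fin N → ℝ) => z.2 i) (aev2 N i) (Q, Y) :=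
    (aev2 N i).hasStrictFDerivAt
  have hinvj : ∀ j, HasStrictFDerivAt (fun z : (Fin N → ℝ) × (Fin N → ℝ) => (z.1 j)⁻¹)
      ((ContinuousLinearMap.smulRight (1 : ℝ →L[ℝ] ℝ) (-((Q j) ^ 2)⁻¹)).comp (aev1 N j))
      (Q, Y) := fun j =>
    (hasStrictFDerivAt_inv (hQ j)).comp (Q, Y) (aev1 N j).hasStrictFDerivAt
  have hA : HasStrictFDerivAt (fun z : (Fin N → ℝ) × (Fin N → ℝ) =>
      ∑ j, F i j * (z.1 j)⁻¹)
      (∑ j, F i j • ((ContinuousLinearMap.smulRight (1 : ℝ →L[ℝ] ℝ) (-((Q j) ^ 2)⁻¹)).comp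
        (aev1 N j))) (Q, Y) :=
    HasStrictFDerivAt.fun_sum (fun j _ => (hinvj j).const_mul (F i j))
  have hB : HasStrictFDerivAt (fun z : (Fin N → ℝ) × (Fin N → ℝ) =>
      (1 / c) * n i * (∑ j, ω j * (z.1 j)⁻¹))
      (((1:ℝ)/c * n i) • ∑ j, ω j • ((ContinuousLinearMap.smulRight (1 : ℝ →L[ℝ] ℝ)
        (-((Q j) ^ 2)⁻¹)).comp (aev1 N j))) (Q, Y) :=
    (HasStrictFDerivAt.fun_sum (fun j _ => (hinvj j).const_mul (ω j))).const_mul _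
  have heq : (fun z : (Fin N → ℝ) × (Fin N → ℝ) =>
      (1/2:ℝ) * (z.2 i + ((F.mulVec (fun j => (z.1 j)⁻¹)) i
        + (1 / c) * n i * (∑ j, ω j * (z.1 j)⁻¹))))
      = fun z => (1/2:ℝ) * (z.2 i + ((∑ j, F i j * (z.1 j)⁻¹)
        + (1 / c) * n i * (∑ j, ω j * (z.1 j)⁻¹))) := by
    funext z; simp [Matrix.mulVec, dotProduct]
  rw [heq]
  have hall := (h2.add (hA.add hB)).const_mul (1/2 : ℝ)
  refine HasStrictFDerivAt.congr_fderiv hall ?_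
  refine ContinuousLinearMap.ext fun w => ?_
  simp only [ContinuousLinearMap.add_apply, ContinuousLinearMap.smul_apply,
    ContinuousLinearMap.sum_apply, ContinuousLinearMap.comp_apply,
    ContinuousLinearMap.smulRight_apply, ContinuousLinearMap.one_apply,
    aev1_apply, aev2_apply, smul_eq_mul]
  have key : ∑ j, -((F i j + 1 / c * n i * ω j) / Q j ^ 2) / 2 * w.1 j
      = 1/2 * (∑ j, F i j * (w.1 j * -(Q j ^ 2)⁻¹))
        + 1/2 * ((1/c) * n i * ∑ j, ω j * (w.1 j * -(Q j ^ 2)⁻¹)) := by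
    rw [Finset.mul_sum, Finset.mul_sum, Finset.mul_sum, ← Finset.sum_add_distrib]
    refine Finset.sum_congr rfl fun j _ => ?_
    field_simp
    ring
  rw [key]
  ring

end AuxDefs

set_option maxHeartbeats 2000000 in
/-- Local convergence of the averaged fixed-point iteration
(Theorem 2). -/
theorem averaged_fixed_point_local_convergence
    (N : ℕ) (hN : 2 ≤ N) (F : Matrix (Fin N) (Fin N) ℝ)
    (hFd : ∀ i, F i i = 0) (hFo : ∀ i j, i ≠ j → 0 < F i j)
    (ω n : Fin N → ℝ) (hω : ∀ i, 0 < ω i) (hn : ∀ i, 0 < n i)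
    (c : ℝ) (hc : 0 < c)
    (T : ((Fin N → ℝ) × (Fin N → ℝ)) → ((Fin N → ℝ) × (Fin N → ℝ)))
    (hT : ∀ z : (Fin N → ℝ) × (Fin N → ℝ),
      T z = (fun i => ((F.transpose.mulVec z.1) i + ω i) / (z.1 i * z.2 i),
             fun i => (F.mulVec (fun j => (z.1 j)⁻¹)) i
               + (1 / c) * n i * (∑ j, ω j * (z.1 j)⁻¹)))
    (zstar : (Fin N → ℝ) × (Fin N → ℝ))
    (hqpos : ∀ i, 0 < zstar.1 i) (hypos : ∀ i, 0 < zstar.2 i)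
    (hfix : T zstar = zstar) :
    ∃ ε > 0, ∀ z₀ : (Fin N → ℝ) × (Fin N → ℝ), ‖z₀ - zstar‖ < ε →
      Tendsto (fun k : ℕ => ((fun z => (1 / 2 : ℝ) • (z + T z))^[k]) z₀)
        atTop (nhds zstar) := by
  classical
  haveI : Nonempty (Fin N) := ⟨⟨0, by omega⟩⟩
  obtain ⟨Q, Y⟩ := zstar
  simp only at hqpos hypos
  set g : ((Fin N → ℝ) × (Fin N → ℝ)) → ((Fin N → ℝ) × (Fin N → ℝ)) :=
    fun z => (1 / 2 : ℝ) • (z + T z) with hg_def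
  -- positivity facts
  have hQpos : ∀ i, 0 < Q i := hqpos
  have hYpos : ∀ i, 0 < Y i := hypos
  have hQne : ∀ i, Q i ≠ 0 := fun i => (hQpos i).ne'
  have hYne : ∀ i, Y i ≠ 0 := fun i => (hYpos i).ne'
  -- fixed point identities
  have hfix' := hfix
  rw [hT (Q, Y)] at hfix'
  have hfix1 : ∀ i, ((F.transpose.mulVec Q) i + ω i) / (Q i * Y i) = Q i := fun i =>
    congrFun (congrArg Prod.fst hfix') i
  have hfix2 : ∀ i, (F.mulVec (fun j => (Q j)⁻¹)) i + (1 / c) * n i * (∑ j, ω j * (Q j)⁻¹)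
      = Y i := fun i => congrFun (congrArg Prod.snd hfix') i
  have numeq : ∀ i, ∑ j, F j i * Q j + ω i = Q i * (Q i * Y i) := by
    intro i
    have h := hfix1 i
    rw [div_eq_iff (mul_ne_zero (hQne i) (hYne i))] at h
    have : (F.transpose.mulVec Q) i = ∑ j, F j i * Q j := by
      simp [Matrix.mulVec, dotProduct, Matrix.transpose_apply]
    rw [this] at h
    linarith [h]
  have yeq : ∀ i, (∑ j, F i j * (Q j)⁻¹) + (1 / c) * n i * (∑ j, ω j * (Q j)⁻¹) = Y i := by
    intro i
    have h := hfix2 i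
    have : (F.mulVec (fun j => (Q j)⁻¹)) i = ∑ j, F i j * (Q j)⁻¹ := by
      simp [Matrix.mulVec, dotProduct]
    rw [this] at h
    exact h
  -- weights
  set p : Fin N → ℝ := Q with hp_def
  set s : Fin N → ℝ := fun i => Y i + ω i / (2 * (Q i)^2) with hs_def
  have hppos : ∀ i, 0 < p i := hQpos
  have hspos : ∀ i, 0 < s i := by
    intro i
    have hQi := hQpos i
    have h2Q : 0 < 2 * (Q i)^2 := by positivity
    have : 0 < ω i / (2 * (Q i)^2) := div_pos (hω i) h2Q
    simp only [hs_def]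
    linarith [hYpos i]
  -- the derivative rows
  set Lrow1 : Fin N → ((Fin N → ℝ) × (Fin N → ℝ)) →L[ℝ] ℝ :=
    fun i => (∑ j, (F j i/(2*Q i*Y i)) • aev1 N j) + (-(Q i)/(2*Y i)) • aev2 N i with hLrow1
  set Lrow2 : Fin N → ((Fin N → ℝ) × (Fin N → ℝ)) →L[ℝ] ℝ :=
    fun i => (∑ j, (-((F i j + (1/c) * n i * ω j)/((Q j)^2))/2) • aev1 N j)
      + (1/2:ℝ) • aev2 N i with hLrow2
  set L : ((Fin N → ℝ) × (Fin N → ℝ)) →L[ℝ] ((Fin N → ℝ) × (Fin N → ℝ)) :=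
    (ContinuousLinearMap.pi Lrow1).prod (ContinuousLinearMap.pi Lrow2) with hL
  -- g in explicit coordinates
  have hgexp : g = fun z => (fun i => (1/2:ℝ) * (z.1 i
        + ((F.transpose.mulVec z.1) i + ω i) / (z.1 i * z.2 i)),
      fun i => (1/2:ℝ) * (z.2 i + ((F.mulVec (fun j => (z.1 j)⁻¹)) i
        + (1 / c) * n i * (∑ j, ω j * (z.1 j)⁻¹)))) := by
    funext z
    simp only [hg_def, hT z]
    refine Prod.ext (funext fun i => ?_) (funext fun i => ?_) <;>
      · simp only [Prod.smul_def, Prod.fst_add, Prod.snd_add, Pi.smul_apply, Pi.add_apply,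
          smul_eq_mul]
        try ring
  -- derivative of g
  have hgderiv : HasStrictFDerivAt g L (Q, Y) := by
    rw [hgexp, hL]
    refine HasStrictFDerivAt.prodMk ?_ ?_
    · exact hasStrictFDerivAt_pi.2 fun i => coord1_deriv F ω Q Y i (hQne i) (hYne i) (numeq i)
    · exact hasStrictFDerivAt_pi.2 fun i => coord2_deriv F ω n Q Y c i hQne
  -- conjugation
  set Φ := ascale p s with hΦ
  set Ψ := ascale (fun i => (p i)⁻¹) (fun i => (s i)⁻¹) with hΨ
  have hsne : ∀ i, s i ≠ 0 := fun i => (hspos i).ne'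
  have hΦΨ : ∀ z, Φ (Ψ z) = z := by
    intro z
    simp only [hΦ, hΨ, ascale_apply]
    refine Prod.ext (funext fun i => ?_) (funext fun i => ?_)
    · show p i * ((p i)⁻¹ * z.1 i) = z.1 i
      rw [← mul_assoc, mul_inv_cancel₀ (hQne i), one_mul]
    · show s i * ((s i)⁻¹ * z.2 i) = z.2 i
      rw [← mul_assoc, mul_inv_cancel₀ (hsne i), one_mul]
  have hΨΦ : ∀ z, Ψ (Φ z) = z := by
    intro z
    simp only [hΦ, hΨ, ascale_apply]
    refine Prod.ext (funext fun i => ?_) (funext fun i => ?_)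
    · show (p i)⁻¹ * (p i * z.1 i) = z.1 i
      rw [← mul_assoc, inv_mul_cancel₀ (hQne i), one_mul]
    · show (s i)⁻¹ * (s i * z.2 i) = z.2 i
      rw [← mul_assoc, inv_mul_cancel₀ (hsne i), one_mul]
  set wstar := Ψ (Q, Y) with hwstar
  set h : ((Fin N → ℝ) × (Fin N → ℝ)) → ((Fin N → ℝ) × (Fin N → ℝ)) :=
    fun w => Ψ (g (Φ w)) with hh_def
  have hΦw : Φ wstar = (Q, Y) := hΦΨ _
  have hgfix : g (Q, Y) = (Q, Y) := by
    simp only [hg_def]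
    rw [show T (Q, Y) = (Q, Y) from hfix, ← two_smul ℝ (Q, Y), smul_smul]; norm_num
  have hhfix : h wstar = wstar := by
    simp only [hh_def, hΦw, hgfix, hwstar, hΦΨ]
  set M := Ψ.comp (L.comp Φ) with hM
  have hhderiv : HasStrictFDerivAt h M wstar := by
    have h1 : HasStrictFDerivAt g L (Φ wstar) := by rw [hΦw]; exact hgderiv
    exact (Ψ.hasStrictFDerivAt).comp wstar (h1.comp wstar (Φ.hasStrictFDerivAt))
  -- row bounds
  set κ1 : Fin N → ℝ := fun i =>
    (p i)⁻¹ * ((∑ j, (F j i/(2*Q i*Y i)) * p j) + (Q i/(2*Y i)) * s i) with hκ1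
  set κ2 : Fin N → ℝ := fun i =>
    (s i)⁻¹ * ((∑ j, ((F i j + (1/c) * n i * ω j)/((Q j)^2)/2) * p j) + (1/2) * s i) with hκ2
  have hFnonneg : ∀ i j, 0 ≤ F i j := by
    intro i j
    rcases eq_or_ne i j with rfl | hij
    · exact le_of_eq (hFd i).symm
    · exact (hFo i j hij).le
  have hκ1lt : ∀ i, κ1 i < 1 := by
    intro i
    have hsum : ∑ j, (F j i/(2*Q i*Y i)) * p j = (Q i * (Q i * Y i) - ω i) / (2*Q i*Y i) := by
      have : ∑ j, (F j i/(2*Q i*Y i)) * p j = (∑ j, F j i * Q j) / (2*Q i*Y i) := by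
        rw [Finset.sum_div]
        exact Finset.sum_congr rfl fun j _ => by simp only [hp_def]; ring
      rw [this]
      congr 1
      linarith [numeq i]
    simp only [hκ1]
    rw [hsum]
    simp only [hp_def, hs_def]
    have h1 : 0 < Q i := hQpos i
    have h2 : 0 < Y i := hYpos i
    have h3 : 0 < ω i := hω i
    rw [show (Q i * (Q i * Y i) - ω i) / (2*Q i*Y i) + Q i/(2*Y i) * (Y i + ω i/(2*(Q i)^2))
        = Q i - ω i / (4 * Q i * Y i) by field_simp; ring]
    rw [inv_mul_lt_iff₀ h1, mul_one]
    have : 0 < ω i / (4 * Q i * Y i) := by positivity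
    linarith
  have hκ2lt : ∀ i, κ2 i < 1 := by
    intro i
    clear_value s
    have hsum : ∑ j, ((F i j + (1/c) * n i * ω j)/((Q j)^2)/2) * p j = (1/2) * Y i := by
      have : ∀ j ∈ Finset.univ, ((F i j + (1/c) * n i * ω j)/((Q j)^2)/2) * p j
          = (1/2) * (F i j * (Q j)⁻¹) + (1/2) * ((1/c) * n i * (ω j * (Q j)⁻¹)) := by
        intro j _
        simp only [hp_def]
        field_simp [hQne j, hc.ne']
      rw [Finset.sum_congr rfl this, Finset.sum_add_distrib, ← Finset.mul_sum, ← Finset.mul_sum]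
      have : ∑ j, (1/c) * n i * (ω j * (Q j)⁻¹) = (1/c) * n i * ∑ j, ω j * (Q j)⁻¹ := by
        rw [Finset.mul_sum]
      rw [this]
      have := yeq i
      nlinarith [yeq i]
    simp only [hκ2, hsum]
    have h2 : 0 < s i := hspos i
    have hY : 0 < Y i := hYpos i
    have hlt : (1/2) * Y i + (1/2) * s i < s i := by
      have : Y i < s i := by
        simp only [hs_def]
        have hQi := hQpos i
        have : 0 < ω i / (2 * (Q i)^2) := div_pos (hω i) (by positivity)
        linarith
      nlinarith [this]
    calc (s i)⁻¹ * ((1/2) * Y i + (1/2) * s i) < (s i)⁻¹ * s i := by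
          exact mul_lt_mul_of_pos_left hlt (inv_pos.2 h2)
      _ = 1 := inv_mul_cancel₀ h2.ne'
  -- the global bound
  set κ : ℝ := Finset.univ.sup' Finset.univ_nonempty (fun i => max (κ1 i) (κ2 i)) with hκ
  have hκlt : κ < 1 := by
    rw [hκ, Finset.sup'_lt_iff]
    intro i _
    exact max_lt (hκ1lt i) (hκ2lt i)
  set κ₀ : ℝ := max κ 0 with hκ₀
  have hκ₀lt : κ₀ < 1 := max_lt hκlt one_pos
  have hκ₀nonneg : 0 ≤ κ₀ := le_max_right _ _
  have hκ1le : ∀ i, κ1 i ≤ κ₀ := fun i =>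
    le_max_of_le_left ((le_max_left _ _).trans (Finset.le_sup' (fun i => max (κ1 i) (κ2 i)) (Finset.mem_univ i)))
  have hκ2le : ∀ i, κ2 i ≤ κ₀ := fun i =>
    le_max_of_le_left ((le_max_right _ _).trans (Finset.le_sup' (fun i => max (κ1 i) (κ2 i)) (Finset.mem_univ i)))
  -- operator norm bound for M
  have hpinv : ∀ i, (0:ℝ) < (p i)⁻¹ := fun i => inv_pos.2 (hppos i)
  have hsinv : ∀ i, (0:ℝ) < (s i)⁻¹ := fun i => inv_pos.2 (hspos i)
  have hcoef1 : ∀ i j, (0:ℝ) ≤ F j i / (2*Q i*Y i) := fun i j =>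
    div_nonneg (hFnonneg j i) (by nlinarith [hQpos i, hYpos i])
  have hcoef2 : ∀ i j, (0:ℝ) ≤ (F i j + (1/c) * n i * ω j)/((Q j)^2)/2 := fun i j =>
    div_nonneg (div_nonneg (add_nonneg (hFnonneg i j)
      (mul_nonneg (mul_nonneg (one_div_nonneg.2 hc.le) (hn i).le) (hω j).le))
      (sq_nonneg (Q j))) (by norm_num)
  have hMbound : ∀ w : (Fin N → ℝ) × (Fin N → ℝ), ‖M w‖ ≤ κ₀ * ‖w‖ := by
    intro w
    have hw1 : ∀ j, |w.1 j| ≤ ‖w‖ := by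
      intro j
      calc |w.1 j| = ‖w.1 j‖ := (Real.norm_eq_abs _).symm
        _ ≤ ‖w.1‖ := norm_le_pi_norm w.1 j
        _ ≤ ‖w‖ := norm_fst_le w
    have hw2 : ∀ j, |w.2 j| ≤ ‖w‖ := by
      intro j
      calc |w.2 j| = ‖w.2 j‖ := (Real.norm_eq_abs _).symm
        _ ≤ ‖w.2‖ := norm_le_pi_norm w.2 j
        _ ≤ ‖w‖ := norm_snd_le w
    have hwnn : 0 ≤ ‖w‖ := norm_nonneg w
    -- compute components of M w
    have hMw : M w = (fun i => (p i)⁻¹ * ((∑ j, (F j i/(2*Q i*Y i)) * (p j * w.1 j))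
          + (-(Q i)/(2*Y i)) * (s i * w.2 i)),
        fun i => (s i)⁻¹ * ((∑ j, (-((F i j + (1/c) * n i * ω j)/((Q j)^2))/2) * (p j * w.1 j))
          + (1/2) * (s i * w.2 i))) := by
      simp only [hM, ContinuousLinearMap.comp_apply, hΦ, hΨ, ascale_apply, hL,
        ContinuousLinearMap.prod_apply, ContinuousLinearMap.pi_apply, hLrow1, hLrow2,
        ContinuousLinearMap.add_apply, ContinuousLinearMap.sum_apply,
        ContinuousLinearMap.smul_apply, aev1_apply, aev2_apply, smul_eq_mul]
    rw [hMw]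
    rw [Prod.norm_def]
    refine max_le ?_ ?_
    · rw [pi_norm_le_iff_of_nonneg (mul_nonneg hκ₀nonneg hwnn)]
      intro i
      rw [Real.norm_eq_abs]
      have habs : |(p i)⁻¹ * ((∑ j, (F j i/(2*Q i*Y i)) * (p j * w.1 j))
          + (-(Q i)/(2*Y i)) * (s i * w.2 i))|
          ≤ (p i)⁻¹ * ((∑ j, (F j i/(2*Q i*Y i)) * p j * ‖w‖) + (Q i/(2*Y i)) * s i * ‖w‖) := by
        rw [abs_mul, abs_of_pos (hpinv i)]
        refine mul_le_mul_of_nonneg_left ?_ (hpinv i).le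
        refine (abs_add_le _ _).trans (add_le_add ?_ ?_)
        · refine (Finset.abs_sum_le_sum_abs _ _).trans ?_
          refine Finset.sum_le_sum fun j _ => ?_
          rw [abs_mul, abs_mul]
          rw [abs_of_nonneg (hcoef1 i j), abs_of_pos (hppos j)]
          rw [mul_assoc _ (p j) ‖w‖]
          refine mul_le_mul_of_nonneg_left ?_ (hcoef1 i j)
          exact mul_le_mul_of_nonneg_left (hw1 j) (hppos j).le
        · rw [abs_mul, abs_mul]
          rw [abs_of_pos (hspos i), abs_div, abs_neg, abs_of_pos (hQpos i),
            abs_of_pos (mul_pos two_pos (hYpos i))]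
          rw [mul_assoc]
          refine mul_le_mul_of_nonneg_left ?_
            (div_nonneg (hQpos i).le (mul_pos two_pos (hYpos i)).le)
          exact mul_le_mul_of_nonneg_left (hw2 i) (hspos i).le
      refine habs.trans ?_
      have heq : (p i)⁻¹ * ((∑ j, (F j i/(2*Q i*Y i)) * p j * ‖w‖) + (Q i/(2*Y i)) * s i * ‖w‖)
          = κ1 i * ‖w‖ := by
        rw [hκ1]
        rw [show ∑ j, (F j i/(2*Q i*Y i)) * p j * ‖w‖ = (∑ j, (F j i/(2*Q i*Y i)) * p j) * ‖w‖
          from (Finset.sum_mul _ _ _).symm]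
        ring
      rw [heq]
      exact mul_le_mul_of_nonneg_right (hκ1le i) hwnn
    · rw [pi_norm_le_iff_of_nonneg (mul_nonneg hκ₀nonneg hwnn)]
      intro i
      rw [Real.norm_eq_abs]
      have habs : |(s i)⁻¹ * ((∑ j, (-((F i j + (1/c) * n i * ω j)/((Q j)^2))/2) * (p j * w.1 j))
          + (1/2) * (s i * w.2 i))|
          ≤ (s i)⁻¹ * ((∑ j, ((F i j + (1/c) * n i * ω j)/((Q j)^2)/2) * p j * ‖w‖)
            + (1/2) * s i * ‖w‖) := by
        rw [abs_mul, abs_of_pos (hsinv i)]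
        refine mul_le_mul_of_nonneg_left ?_ (hsinv i).le
        refine (abs_add_le _ _).trans (add_le_add ?_ ?_)
        · refine (Finset.abs_sum_le_sum_abs _ _).trans ?_
          refine Finset.sum_le_sum fun j _ => ?_
          rw [abs_mul, abs_mul]
          rw [show |-((F i j + (1/c) * n i * ω j)/((Q j)^2))/2|
              = (F i j + (1/c) * n i * ω j)/((Q j)^2)/2 by
            rw [abs_div, abs_neg]
            rw [abs_of_nonneg (div_nonneg (add_nonneg (hFnonneg i j)
              (mul_nonneg (mul_nonneg (one_div_nonneg.2 hc.le) (hn i).le) (hω j).le))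
              (sq_nonneg (Q j)))]
            norm_num]
          rw [abs_of_pos (hppos j), mul_assoc _ (p j) ‖w‖]
          refine mul_le_mul_of_nonneg_left ?_ (hcoef2 i j)
          exact mul_le_mul_of_nonneg_left (hw1 j) (hppos j).le
        · rw [abs_mul, abs_mul]
          rw [abs_of_pos (hspos i), abs_of_pos (by norm_num : (0:ℝ) < (1:ℝ)/2)]
          rw [mul_assoc]
          refine mul_le_mul_of_nonneg_left ?_ (by norm_num : (0:ℝ) ≤ (1:ℝ)/2)
          exact mul_le_mul_of_nonneg_left (hw2 i) (hspos i).le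
      refine habs.trans ?_
      have heq : (s i)⁻¹ * ((∑ j, ((F i j + (1/c) * n i * ω j)/((Q j)^2)/2) * p j * ‖w‖)
            + (1/2) * s i * ‖w‖) = κ2 i * ‖w‖ := by
        rw [hκ2]
        rw [show ∑ j, ((F i j + (1/c) * n i * ω j)/((Q j)^2)/2) * p j * ‖w‖
            = (∑ j, ((F i j + (1/c) * n i * ω j)/((Q j)^2)/2) * p j) * ‖w‖
          from (Finset.sum_mul _ _ _).symm]
        ring
      rw [heq]
      exact mul_le_mul_of_nonneg_right (hκ2le i) hwnn
  have hMnorm : ‖M‖ ≤ κ₀ := ContinuousLinearMap.opNorm_le_bound M hκ₀nonneg hMbound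
  -- the Lipschitz constant
  set K : NNReal := ⟨(κ₀ + 1)/2, by positivity⟩ with hK
  have hKlt1 : K < 1 := by
    rw [← NNReal.coe_lt_coe]
    show (κ₀ + 1)/2 < (1:ℝ)
    linarith
  have hMK : ‖M‖₊ < K := by
    rw [← NNReal.coe_lt_coe, coe_nnnorm]
    show ‖M‖ < (κ₀ + 1)/2
    linarith [hMnorm]
  obtain ⟨U, hU, hlip⟩ := hhderiv.exists_lipschitzOnWith_of_nnnorm_lt K hMK
  obtain ⟨r, hr, hball⟩ := Metric.mem_nhds_iff.1 hU
  have hlip' : LipschitzOnWith K h (Metric.closedBall wstar (r/2)) :=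
    hlip.mono ((Metric.closedBall_subset_ball (by linarith)).trans hball)
  have hconv := aux_tendsto_of_lipschitzOnWith h wstar K hKlt1 (r/2) (by linarith) hhfix hlip'
  -- iterates
  have hiter : ∀ (k : ℕ) (z₀ : (Fin N → ℝ) × (Fin N → ℝ)),
      g^[k] z₀ = Φ (h^[k] (Ψ z₀)) := by
    intro k
    induction k with
    | zero => intro z₀; simp [hΦΨ]
    | succ k ih =>
      intro z₀
      rw [Function.iterate_succ_apply', Function.iterate_succ_apply', ih]
      simp only [hh_def, hΦΨ]
  -- choose ε
  refine ⟨(r/2) / (‖Ψ‖ + 1), by positivity, ?_⟩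
  intro z₀ hz₀
  have hmem : Ψ z₀ ∈ Metric.closedBall wstar (r/2) := by
    rw [Metric.mem_closedBall, dist_eq_norm]
    have : Ψ z₀ - wstar = Ψ (z₀ - (Q, Y)) := by
      rw [hwstar, map_sub]
    rw [this]
    calc ‖Ψ (z₀ - (Q, Y))‖ ≤ ‖Ψ‖ * ‖z₀ - (Q, Y)‖ := Ψ.le_opNorm _
      _ ≤ (‖Ψ‖ + 1) * ‖z₀ - (Q, Y)‖ := by
          have := norm_nonneg (z₀ - (Q, Y)); nlinarith
      _ ≤ (‖Ψ‖ + 1) * ((r/2) / (‖Ψ‖ + 1)) := by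
          refine mul_le_mul_of_nonneg_left hz₀.le (by positivity)
      _ = r/2 := by field_simp
  have htend := hconv (Ψ z₀) hmem
  have htend2 : Tendsto (fun k : ℕ => Φ (h^[k] (Ψ z₀))) atTop (nhds (Φ wstar)) :=
    (Φ.continuous.tendsto wstar).comp htend
  rw [hΦw] at htend2
  refine htend2.congr fun k => ?_
  exact (hiter k z₀).symm
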